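/- Let Σ be a symmetric positive definite p×p matrix whose eigenvalues satisfy λ₁ ≥ ⋯ ≥ λ_k > λ_{k+1} = ⋯ = λ_p, and let δ ∈ ℝ^p. Define the total covariance Σ_tot = Σ + ρ δ δᵀ for some ρ > 0, and let R₁ be a p×(k+1) matrix whose columns are orthonormal eigenvectors of Σ_tot corresponding to its top k+1 eigenvalues, and R₂ a p×(p−k−1) matrix whose columns are orthonormal eigenvectors corresponding to the remaining eigenvalues. Then R₂ᵀ Σ⁻¹ δ = 0; i.e., the vector β = Σ⁻¹ δ lies in the span of the columns of R₁. -/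

import Mathlib

open Matrix

lemma aux_exists_kernel {m n : ℕ} (h : m < n) (M : Matrix (Fin m) (Fin n) ℝ) :
    ∃ z : Fin n → ℝ, z ≠ 0 ∧ M *ᵥ z = 0 := by
  have hker : LinearMap.ker M.mulVecLin ≠ ⊥ := by
    intro hbot
    have hinj : Function.Injective M.mulVecLin := LinearMap.ker_eq_bot.mp hbot
    have := LinearMap.finrank_le_finrank_of_injective hinj
    simp [Module.finrank_pi] at this
    omega
  obtain ⟨z, hz, hz0⟩ := Submodule.exists_mem_ne_zero_of_ne_bot hker
  exact ⟨z, hz0, by simpa [Matrix.mulVecLin_apply] using hz⟩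


/-- Theorem 1 of the paper (static version): for a spiked covariance `Σ`, the normal
vector `β = Σ⁻¹ δ` lies in the span of the top `k+1` eigenvectors of the total
covariance `Σ_tot = Σ + ρ δ δᵀ`, i.e. `R₂ᵀ β = 0`. Here the eigendecompositions are
encoded by orthogonal matrices `Q`, `R` and eigenvalue vectors sorted in descending
order. The columns of `R` with index `≥ k+1` form `R₂`. -/
theorem stmt_0 {p k : ℕ} (hkp : k + 1 < p)
    (S : Matrix (Fin p) (Fin p) ℝ) (hsymm : S.IsSymm) (hpd : S.PosDef)
    (lam : Fin p → ℝ) (Q : Matrix (Fin p) (Fin p) ℝ)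
    (hQ1 : Qᵀ * Q = 1) (hQ2 : Q * Qᵀ = 1)
    (hdiagQ : Qᵀ * S * Q = Matrix.diagonal lam)
    (hlam_mono : Antitone lam)
    (hspike : ∀ i j : Fin p, k ≤ (i : ℕ) → k ≤ (j : ℕ) → lam i = lam j)
    (hgap : ∀ i j : Fin p, (i : ℕ) < k → k ≤ (j : ℕ) → lam j < lam i)
    (δ : Fin p → ℝ) (ρ : ℝ) (hρ : 0 < ρ)
    (μ : Fin p → ℝ) (R : Matrix (Fin p) (Fin p) ℝ)
    (hR1 : Rᵀ * R = 1) (hR2 : R * Rᵀ = 1)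
    (hdiagR : Rᵀ * (S + ρ • vecMulVec δ δ) * R = Matrix.diagonal μ)
    (hμ_mono : Antitone μ) :
    ∀ j : Fin p, k + 1 ≤ (j : ℕ) → (Rᵀ *ᵥ (S⁻¹ *ᵥ δ)) j = 0 := by
  have hk : k < p := by omega
  set lam0 := lam ⟨k, hk⟩ with hlam0
  set St := S + ρ • vecMulVec δ δ with hSt
  -- reconstructions
  have hSeq : S = Q * Matrix.diagonal lam * Qᵀ := by
    rw [← hdiagQ]
    simp only [← Matrix.mul_assoc]
    rw [hQ2, Matrix.one_mul, Matrix.mul_assoc, hQ2, Matrix.mul_one]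
  have hSteq : St = R * Matrix.diagonal μ * Rᵀ := by
    rw [← hdiagR]
    simp only [← Matrix.mul_assoc]
    rw [hR2, Matrix.one_mul, Matrix.mul_assoc, hR2, Matrix.mul_one]
  -- columns
  set rc : Fin p → (Fin p → ℝ) := fun j i => R i j with hrc
  set qc : Fin p → (Fin p → ℝ) := fun j i => Q i j with hqc
  have hrr : ∀ a b : Fin p, rc a ⬝ᵥ rc b = if a = b then 1 else 0 := by
    intro a b
    have := congrFun (congrFun hR1 a) b
    simpa [Matrix.mul_apply, Matrix.one_apply, dotProduct, hrc] using this
  -- lam0 is the min eigenvalue, and positive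
  have hlam_ge : ∀ i : Fin p, lam0 ≤ lam i := by
    intro i
    rcases lt_or_ge (i : ℕ) k with h | h
    · exact le_of_lt (hgap i ⟨k, hk⟩ h le_rfl)
    · exact le_of_eq (hspike ⟨k, hk⟩ i le_rfl h)
  have hlam_eq : ∀ i : Fin p, k ≤ (i : ℕ) → lam i = lam0 := fun i h =>
    hspike i ⟨k, hk⟩ h le_rfl
  -- mulVec formulas
  have hSmul : ∀ x : Fin p → ℝ, S *ᵥ x = Q *ᵥ (fun i => lam i * (Qᵀ *ᵥ x) i) := by
    intro x
    rw [hSeq, Matrix.mul_assoc, ← Matrix.mulVec_mulVec, ← Matrix.mulVec_mulVec]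
    have hd : Matrix.diagonal lam *ᵥ (Qᵀ *ᵥ x) = fun i => lam i * (Qᵀ *ᵥ x) i :=
      funext fun i => Matrix.mulVec_diagonal _ _ _
    rw [hd]
  have hQQx : ∀ x : Fin p → ℝ, Q *ᵥ (Qᵀ *ᵥ x) = x := by
    intro x
    rw [Matrix.mulVec_mulVec, hQ2, Matrix.one_mulVec]
  have hSx_eigen : ∀ x : Fin p → ℝ, (∀ i : Fin p, (i : ℕ) < k → (Qᵀ *ᵥ x) i = 0) →
      S *ᵥ x = lam0 • x := by
    intro x hx
    rw [hSmul]
    have : (fun i => lam i * (Qᵀ *ᵥ x) i) = lam0 • (Qᵀ *ᵥ x) := by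
      funext i
      rcases lt_or_ge (i : ℕ) k with h | h
      · simp [hx i h]
      · simp [hlam_eq i h, smul_eq_mul]
    rw [this, Matrix.mulVec_smul, hQQx]
  -- quadratic form of S in Q-coordinates
  have hquadS : ∀ x : Fin p → ℝ,
      x ⬝ᵥ (S *ᵥ x) = ∑ i, lam i * ((Qᵀ *ᵥ x) i)^2 := by
    intro x
    rw [hSmul, Matrix.dotProduct_mulVec, ← Matrix.mulVec_transpose]
    simp [dotProduct]
    exact Finset.sum_congr rfl fun i _ => by ring
  have hnormQ : ∀ x : Fin p → ℝ, ∑ i, ((Qᵀ *ᵥ x) i)^2 = x ⬝ᵥ x := by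
    intro x
    have : (Qᵀ *ᵥ x) ⬝ᵥ (Qᵀ *ᵥ x) = x ⬝ᵥ x := by
      rw [Matrix.dotProduct_mulVec, ← Matrix.mulVec_transpose, Matrix.transpose_transpose,
        Matrix.mulVec_mulVec, hQ2, Matrix.one_mulVec]
    simpa [dotProduct, pow_two] using this
  -- basic facts about St
  have hvmv : ∀ x : Fin p → ℝ, vecMulVec δ δ *ᵥ x = (δ ⬝ᵥ x) • δ := by
    intro x
    funext i
    simp only [Matrix.mulVec, Matrix.vecMulVec_apply, dotProduct, Pi.smul_apply,
      smul_eq_mul, Finset.sum_mul]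
    exact Finset.sum_congr rfl fun j _ => by ring
  have hStx : ∀ x : Fin p → ℝ, St *ᵥ x = S *ᵥ x + (ρ * (δ ⬝ᵥ x)) • δ := by
    intro x
    rw [hSt, Matrix.add_mulVec, Matrix.smul_mulVec, hvmv, smul_smul]
  -- columns of R are eigenvectors of St
  have hStR : ∀ j : Fin p, St *ᵥ rc j = μ j • rc j := by
    intro j
    have hcol : St * R = R * Matrix.diagonal μ := by
      rw [hSteq, Matrix.mul_assoc, hR1, Matrix.mul_one]
    funext i
    have h := congrFun (congrFun hcol i) j
    rw [Matrix.mul_diagonal] at h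
    simpa [Matrix.mul_apply, Matrix.mulVec, dotProduct, hrc, mul_comm] using h
  -- quadratic form lower bound : μ j ≥ lam0
  have hrnorm : ∀ j : Fin p, rc j ⬝ᵥ rc j = 1 := by
    intro j; simp [hrr j j]
  have hquadSt : ∀ j : Fin p, rc j ⬝ᵥ (St *ᵥ rc j) = μ j := by
    intro j
    rw [hStR j]
    simp [dotProduct_smul, hrnorm j, smul_eq_mul]
  have hSlow : ∀ x : Fin p → ℝ, lam0 * (x ⬝ᵥ x) ≤ x ⬝ᵥ (S *ᵥ x) := by
    intro x
    rw [hquadS, ← hnormQ x, Finset.mul_sum]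
    apply Finset.sum_le_sum
    intro i _
    have := hlam_ge i
    nlinarith [sq_nonneg ((Qᵀ *ᵥ x) i)]
  have hμ_ge : ∀ j : Fin p, lam0 ≤ μ j := by
    intro j
    have h1 := hquadSt j
    rw [hStx] at h1
    have h2 : rc j ⬝ᵥ (S *ᵥ rc j) + ρ * (δ ⬝ᵥ rc j)^2 = μ j := by
      rw [← h1]
      simp [dotProduct_add, dotProduct_smul, smul_eq_mul, pow_two]
      ring_nf
      rw [dotProduct_comm]
      ring
    have h3 := hSlow (rc j)
    rw [hrnorm j, mul_one] at h3
    nlinarith [mul_nonneg hρ.le (sq_nonneg (δ ⬝ᵥ rc j))]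
  -- St is symmetric
  have hStsymm : Stᵀ = St := by
    rw [hSteq]
    simp [Matrix.transpose_mul, Matrix.transpose_transpose, Matrix.diagonal_transpose,
      Matrix.mul_assoc]
  have hdotSt : ∀ u v : Fin p → ℝ, u ⬝ᵥ (St *ᵥ v) = (St *ᵥ u) ⬝ᵥ v := by
    intro u v
    rw [Matrix.dotProduct_mulVec, ← Matrix.mulVec_transpose, hStsymm]
  -- the (k+1)-st eigenvalue of St equals lam0
  have hμtop : μ ⟨k + 1, hkp⟩ = lam0 := by
    by_contra hne
    have hμgt : ∀ i : Fin p, (i : ℕ) ≤ k + 1 → lam0 < μ i := by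
      intro i hi
      have h1 : μ ⟨k + 1, hkp⟩ ≤ μ i := hμ_mono (by simpa [Fin.le_def] using hi)
      have h2 := lt_of_le_of_ne (hμ_ge ⟨k + 1, hkp⟩) (Ne.symm hne)
      linarith
    set cb : Fin (k + 2) → Fin p := fun b => ⟨b, by omega⟩ with hcb
    set M : Matrix (Fin (k + 1)) (Fin (k + 2)) ℝ := fun a b =>
      if (a : ℕ) < k then qc ⟨a, by omega⟩ ⬝ᵥ rc (cb b) else δ ⬝ᵥ rc (cb b) with hM
    obtain ⟨z, hz0, hMz⟩ := aux_exists_kernel (by omega) M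
    set x : Fin p → ℝ := ∑ b : Fin (k + 2), z b • rc (cb b) with hx
    have hdotx : ∀ v : Fin p → ℝ, v ⬝ᵥ x = ∑ b : Fin (k + 2), z b * (v ⬝ᵥ rc (cb b)) := by
      intro v
      rw [hx]
      simp only [dotProduct, Finset.sum_apply, Pi.smul_apply, smul_eq_mul, Finset.mul_sum]
      rw [Finset.sum_comm]
      exact Finset.sum_congr rfl fun b _ => Finset.sum_congr rfl fun i _ => by ring
    have hMzrow : ∀ a : Fin (k + 1), ∑ b : Fin (k + 2), M a b * z b = 0 := by
      intro a
      have := congrFun hMz a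
      simpa [Matrix.mulVec, dotProduct] using this
    have hQx : ∀ i : Fin p, (i : ℕ) < k → (Qᵀ *ᵥ x) i = 0 := by
      intro i hi
      have ha : (Qᵀ *ᵥ x) i = qc i ⬝ᵥ x := by
        simp [Matrix.mulVec, dotProduct, hqc, Matrix.transpose_apply]
      rw [ha, hdotx]
      have h := hMzrow ⟨i, by omega⟩
      have he : (⟨(⟨(i : ℕ), by omega⟩ : Fin (k + 1)) , by omega⟩ : Fin p) = i := by
        apply Fin.ext; rfl
      simp only [hM, hi, if_pos, he] at h
      rw [← h]
      exact Finset.sum_congr rfl fun b _ => by ring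
    have hδx : δ ⬝ᵥ x = 0 := by
      rw [hdotx]
      have h := hMzrow ⟨k, by omega⟩
      rw [← h]
      exact Finset.sum_congr rfl fun b _ => by simp [hM, mul_comm]
    have hcbinj : Function.Injective cb := by
      intro a b hab
      have h := congrArg Fin.val hab
      exact Fin.ext h
    have hrx : ∀ b : Fin (k + 2), rc (cb b) ⬝ᵥ x = z b := by
      intro b
      rw [hdotx]
      have hb' : ∀ b' : Fin (k + 2), rc (cb b) ⬝ᵥ rc (cb b') = if b' = b then 1 else 0 := by
        intro b'
        rw [hrr]
        by_cases h : b' = b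
        · simp [h]
        · rw [if_neg, if_neg h]
          intro hc
          exact h (hcbinj hc.symm)
      simp [hb']
    have hStxx : St *ᵥ x = lam0 • x := by
      rw [hStx x, hδx, hSx_eigen x hQx]
      simp
    have hzzero : ∀ b : Fin (k + 2), z b = 0 := by
      intro b
      have h1 : rc (cb b) ⬝ᵥ (St *ᵥ x) = lam0 * z b := by
        rw [hStxx, dotProduct_smul, hrx b, smul_eq_mul]
      have h2 : rc (cb b) ⬝ᵥ (St *ᵥ x) = μ (cb b) * z b := by
        rw [hdotSt, hStR, smul_dotProduct, hrx b, smul_eq_mul]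
      have h3 : lam0 < μ (cb b) := hμgt (cb b) (by simp [hcb]; omega)
      have h4 : (μ (cb b) - lam0) * z b = 0 := by linear_combination h1 - h2
      rcases mul_eq_zero.mp h4 with h | h
      · exact absurd (by linarith : μ (cb b) = lam0) (by linarith)
      · exact h
    exact hz0 (funext hzzero)
  -- now the conclusion
  intro j hj
  have hμj : μ j = lam0 := by
    have h1 : μ j ≤ μ ⟨k + 1, hkp⟩ := hμ_mono (by simpa [Fin.le_def] using hj)
    have h2 := hμ_ge j
    rw [hμtop] at h1
    linarith
  have hδr : δ ⬝ᵥ rc j = 0 := by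
    have h1 := hquadSt j
    rw [hStx] at h1
    have h2 : rc j ⬝ᵥ (S *ᵥ rc j) + ρ * (δ ⬝ᵥ rc j) ^ 2 = μ j := by
      rw [← h1]
      simp [dotProduct_add, dotProduct_smul, smul_eq_mul, pow_two]
      ring_nf
      rw [dotProduct_comm]
      ring
    have h3 := hSlow (rc j)
    rw [hrnorm j, mul_one] at h3
    have h4 : ρ * (δ ⬝ᵥ rc j) ^ 2 ≤ 0 := by rw [hμj] at h2; linarith
    have h5 : (δ ⬝ᵥ rc j) ^ 2 = 0 := by nlinarith [sq_nonneg (δ ⬝ᵥ rc j)]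
    exact pow_eq_zero_iff (by norm_num) |>.mp h5
  have hSr : S *ᵥ rc j = lam0 • rc j := by
    have h := hStR j
    rw [hStx, hδr, hμj] at h
    simpa using h
  -- lam0 > 0
  have hqcnorm : ∀ a : Fin p, qc a ⬝ᵥ qc a = 1 := by
    intro a
    have := congrFun (congrFun hQ1 a) a
    simpa [Matrix.mul_apply, Matrix.one_apply, dotProduct, hqc] using this
  have hlam0_pos : 0 < lam0 := by
    have hq : qc ⟨k, hk⟩ ≠ 0 := by
      intro h0
      have := hqcnorm ⟨k, hk⟩
      rw [h0] at this
      simp [dotProduct] at this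
    have hpos := hpd.dotProduct_mulVec_pos hq
    have hlamq : lam0 = qc ⟨k, hk⟩ ⬝ᵥ (S *ᵥ qc ⟨k, hk⟩) := by
      have h := congrFun (congrFun hdiagQ ⟨k, hk⟩) ⟨k, hk⟩
      rw [Matrix.diagonal_apply_eq] at h
      rw [hlam0, ← h, Matrix.mul_assoc]
      simp only [Matrix.mul_apply, Matrix.mulVec, dotProduct, hqc, Matrix.transpose_apply]
    rw [hlamq]
    simpa using hpos
  -- invert
  have hdet : IsUnit S.det := by
    have := hpd.det_pos
    exact isUnit_iff_ne_zero.mpr (ne_of_gt this)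
  have hinvS : S⁻¹ * S = 1 := Matrix.nonsing_inv_mul S hdet
  have hinvr : S⁻¹ *ᵥ rc j = lam0⁻¹ • rc j := by
    have h := congrArg (fun v => S⁻¹ *ᵥ v) hSr
    simp only [Matrix.mulVec_mulVec, Matrix.mulVec_smul, hinvS, Matrix.one_mulVec] at h
    rw [eq_comm, inv_smul_eq_iff₀ (ne_of_gt hlam0_pos)]
    exact h
  have hgoal : (Rᵀ *ᵥ (S⁻¹ *ᵥ δ)) j = rc j ⬝ᵥ (S⁻¹ *ᵥ δ) := by
    simp [Matrix.mulVec, dotProduct, hrc, Matrix.transpose_apply]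
  rw [hgoal, Matrix.dotProduct_mulVec, ← Matrix.mulVec_transpose,
    Matrix.transpose_nonsing_inv, hsymm.eq, hinvr, smul_dotProduct, smul_eq_mul,
    dotProduct_comm, hδr, mul_zero]
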